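/- Let V and X be real normed spaces, E, F : V → X linear maps, 0 < r < R, ε ∈ (0,1), γ > 0, β > 0, and let τ : [0,∞) → [0,π/2] be a continuous nondecreasing function with τ(t)=0 on [0,r], τ(t)=π/2 on [R,∞), differentiable except possibly at r and R, with 0 ≤ τ'(t) ≤ ε/t on (r,R). Assume 1 ≤ ‖E(u)‖ ≤ 1+γ and 1 ≤ ‖F(u)‖ ≤ 1+γ for every unit vector u ∈ V. Define T(x) = cos(τ(‖x‖))·E(x) + sin(τ(‖x‖))·F(x). If x, y ∈ V satisfy x ≠ y, ‖x‖ ≥ ‖y‖ > 0 and ‖cos(τ(‖x‖))·E(w) + sin(τ(‖x‖))·F(w)‖ ≥ β for w = (x−y)/‖x−y‖, then β − ε·√2·(1+γ) ≤ ‖T(x) − T(y)‖/‖x−y‖ ≤ √2·(1+γ) + ε·√2·(1+γ). -/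

import Mathlib

open Set Real

lemma abs_sin_add_abs_cos_le' (t : ℝ) : |Real.sin t| + |Real.cos t| ≤ Real.sqrt 2 := by
  have h1 : Real.sin t ^ 2 + Real.cos t ^ 2 = 1 := Real.sin_sq_add_cos_sq t
  have h2 : Real.sqrt 2 ^ 2 = 2 := Real.sq_sqrt (by norm_num)
  nlinarith [sq_nonneg (|Real.sin t| - |Real.cos t|),
    sq_nonneg (Real.sqrt 2 - |Real.sin t| - |Real.cos t|),
    sq_abs (Real.sin t), sq_abs (Real.cos t),
    abs_nonneg (Real.sin t), abs_nonneg (Real.cos t), Real.sqrt_nonneg 2]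

set_option maxHeartbeats 1000000 in
/-- **Proposition (bilipschitz-type bounds on each gluing zone).**
Under the spiral gluing hypotheses, if the glued direction `w = (x-y)/‖x-y‖` satisfies the
lower bound `‖cos(τ‖x‖) • E w + sin(τ‖x‖) • F w‖ ≥ β`, then
`β - ε√2(1+γ) ≤ ‖T x - T y‖/‖x-y‖ ≤ √2(1+γ) + ε√2(1+γ)`. -/
theorem spiral_gluing_bilipschitz_bounds
    (V X : Type*)
    [NormedAddCommGroup V] [NormedSpace ℝ V]
    [NormedAddCommGroup X] [NormedSpace ℝ X]
    (E F : V →ₗ[ℝ] X)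
    (r R ε γ β : ℝ) (hr : 0 < r) (hrR : r < R)
    (hε : ε ∈ Set.Ioo (0 : ℝ) 1) (hγ : 0 < γ) (hβ : 0 < β)
    (τ : ℝ → ℝ)
    (hτrange : ∀ t ∈ Set.Ici (0 : ℝ), τ t ∈ Set.Icc 0 (π / 2))
    (hτcont : ContinuousOn τ (Set.Ici 0))
    (hτmono : MonotoneOn τ (Set.Ici 0))
    (hτzero : ∀ t ∈ Set.Icc (0 : ℝ) r, τ t = 0)
    (hτtop : ∀ t ∈ Set.Ici R, τ t = π / 2)
    (hτdiff : ∀ t : ℝ, 0 < t → t ≠ r → t ≠ R → DifferentiableAt ℝ τ t)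
    (hτderiv : ∀ t ∈ Set.Ioo r R, 0 ≤ deriv τ t ∧ deriv τ t ≤ ε / t)
    (hE : ∀ u : V, ‖u‖ = 1 → 1 ≤ ‖E u‖ ∧ ‖E u‖ ≤ 1 + γ)
    (hF : ∀ u : V, ‖u‖ = 1 → 1 ≤ ‖F u‖ ∧ ‖F u‖ ≤ 1 + γ)
    (T : V → X)
    (hT : ∀ x : V, T x = Real.cos (τ ‖x‖) • E x + Real.sin (τ ‖x‖) • F x)
    (x y : V) (hxy : x ≠ y) (hy : 0 < ‖y‖) (hyx : ‖y‖ ≤ ‖x‖)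
    (hlow : β ≤ ‖Real.cos (τ ‖x‖) • E (‖x - y‖⁻¹ • (x - y)) +
        Real.sin (τ ‖x‖) • F (‖x - y‖⁻¹ • (x - y))‖) :
    β - ε * Real.sqrt 2 * (1 + γ) ≤ ‖T x - T y‖ / ‖x - y‖ ∧
      ‖T x - T y‖ / ‖x - y‖ ≤ Real.sqrt 2 * (1 + γ) + ε * Real.sqrt 2 * (1 + γ) := by
  obtain ⟨hε0, hε1⟩ := hε
  have hd : (0:ℝ) < ‖x - y‖ := by rwa [norm_pos_iff, sub_ne_zero]
  have hsqrt2 : (0:ℝ) ≤ Real.sqrt 2 := Real.sqrt_nonneg 2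
  have h1γ : (0:ℝ) < 1 + γ := by linarith
  -- norm bounds for E, F on general vectors
  have hEb : ∀ v : V, ‖E v‖ ≤ (1 + γ) * ‖v‖ := by
    intro v
    rcases eq_or_ne v 0 with rfl | hv
    · simp
    · have hv' : 0 < ‖v‖ := norm_pos_iff.mpr hv
      have hu : ‖(‖v‖⁻¹ • v)‖ = 1 := by
        rw [norm_smul, norm_inv, norm_norm, inv_mul_cancel₀ hv'.ne']
      have h2 := (hE _ hu).2
      have hEv : E v = ‖v‖ • E (‖v‖⁻¹ • v) := by
        rw [map_smul, smul_smul, mul_inv_cancel₀ hv'.ne', one_smul]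
      rw [hEv, norm_smul, norm_norm]
      nlinarith
  have hFb : ∀ v : V, ‖F v‖ ≤ (1 + γ) * ‖v‖ := by
    intro v
    rcases eq_or_ne v 0 with rfl | hv
    · simp
    · have hv' : 0 < ‖v‖ := norm_pos_iff.mpr hv
      have hu : ‖(‖v‖⁻¹ • v)‖ = 1 := by
        rw [norm_smul, norm_inv, norm_norm, inv_mul_cancel₀ hv'.ne']
      have h2 := (hF _ hu).2
      have hFv : F v = ‖v‖ • F (‖v‖⁻¹ • v) := by
        rw [map_smul, smul_smul, mul_inv_cancel₀ hv'.ne', one_smul]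
      rw [hFv, norm_smul, norm_norm]
      nlinarith
  -- the key τ estimate
  have hτ0 : 0 ≤ τ ‖x‖ - τ ‖y‖ :=
    sub_nonneg.mpr (hτmono (norm_nonneg y) (norm_nonneg x) hyx)
  have hba : ‖x‖ - ‖y‖ ≤ ‖x - y‖ := by
    have := abs_norm_sub_norm_le x y
    have := le_abs_self (‖x‖ - ‖y‖)
    linarith
  have hτle : τ ‖x‖ - τ ‖y‖ ≤ ε * ‖x - y‖ / ‖y‖ := by
    have key : τ ‖x‖ - τ ‖y‖ ≤ ε * (‖x‖ - ‖y‖) / ‖y‖ := by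
      set a := ‖y‖ with ha
      set b := ‖x‖ with hb
      set a' := max a r with ha'
      set b' := min b R with hb'
      have ha'r : r ≤ a' := le_max_right a r
      have ha'a : a ≤ a' := le_max_left a r
      have hb'R : b' ≤ R := min_le_right b R
      have hb'b : b' ≤ b := min_le_left b R
      have hτa : τ a = τ a' := by
        rcases le_total r a with h | h
        · rw [ha', max_eq_left h]
        · rw [ha', max_eq_right h, hτzero a ⟨norm_nonneg y, h⟩, hτzero r ⟨hr.le, le_refl r⟩]
      have hτb : τ b = τ b' := by
        rcases le_total b R with h | h
        · rw [hb', min_eq_left h]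
        · rw [hb', min_eq_right h, hτtop b h, hτtop R (le_refl R)]
      rcases lt_or_ge a' b' with hab | hab
      · have hsub : Icc a' b' ⊆ Ici (0:ℝ) := fun t ht => le_trans (le_trans hr.le ha'r) ht.1
        obtain ⟨c, hc, hceq⟩ := exists_deriv_eq_slope τ hab (hτcont.mono hsub)
          (fun t ht => (hτdiff t (lt_of_lt_of_le (lt_of_lt_of_le hr ha'r) ht.1.le)
            (ne_of_gt (lt_of_le_of_lt ha'r ht.1))
            (ne_of_lt (lt_of_lt_of_le ht.2 hb'R))).differentiableWithinAt)
        have hc1 : r < c := lt_of_le_of_lt ha'r hc.1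
        have hc2 : c < R := lt_of_lt_of_le hc.2 hb'R
        have hca : a ≤ c := le_trans ha'a hc.1.le
        have hc0 : 0 < c := lt_trans hr hc1
        have hder := (hτderiv c ⟨hc1, hc2⟩).2
        have hne : b' - a' ≠ 0 := ne_of_gt (sub_pos.mpr hab)
        have heq : τ b' - τ a' = deriv τ c * (b' - a') := by
          rw [hceq, div_mul_cancel₀ _ hne]
        have h1 : deriv τ c * (b' - a') ≤ (ε / a) * (b - a) := by
          have h2 : deriv τ c ≤ ε / a := le_trans hder (by
            apply div_le_div_of_nonneg_left hε0.le hy hca)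
          have h3 : b' - a' ≤ b - a := by linarith
          have h4 : 0 ≤ b' - a' := by linarith
          have h5 : 0 ≤ ε / a := by positivity
          nlinarith [(hτderiv c ⟨hc1, hc2⟩).1]
        rw [hτa, hτb, heq]
        calc deriv τ c * (b' - a') ≤ (ε / a) * (b - a) := h1
          _ = ε * (b - a) / a := by ring
      · have hb'0 : (0:ℝ) ≤ b' := le_min (by linarith) (by linarith)
        have hmono : τ b' ≤ τ a' := hτmono hb'0 (le_trans hr.le ha'r) hab
        have hnn : 0 ≤ ε * (b - a) / a := by
          have : 0 ≤ b - a := by linarith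
          positivity
        rw [hτa, hτb]; linarith
    calc τ ‖x‖ - τ ‖y‖ ≤ ε * (‖x‖ - ‖y‖) / ‖y‖ := key
      _ ≤ ε * ‖x - y‖ / ‖y‖ := by gcongr
  -- decomposition
  have hdecomp : T x - T y =
      (Real.cos (τ ‖x‖) • E (x - y) + Real.sin (τ ‖x‖) • F (x - y)) +
      ((Real.cos (τ ‖x‖) - Real.cos (τ ‖y‖)) • E y +
        (Real.sin (τ ‖x‖) - Real.sin (τ ‖y‖)) • F y) := by
    rw [hT x, hT y, map_sub, map_sub]
    module
  have hw1 : ‖(‖x - y‖⁻¹ • (x - y))‖ = 1 := by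
    rw [norm_smul, norm_inv, norm_norm, inv_mul_cancel₀ hd.ne']
  -- main term bounds
  have hMnorm : ‖Real.cos (τ ‖x‖) • E (x - y) + Real.sin (τ ‖x‖) • F (x - y)‖ =
      ‖x - y‖ * ‖Real.cos (τ ‖x‖) • E (‖x - y‖⁻¹ • (x - y)) +
        Real.sin (τ ‖x‖) • F (‖x - y‖⁻¹ • (x - y))‖ := by
    have hrep : Real.cos (τ ‖x‖) • E (‖x - y‖⁻¹ • (x - y)) +
        Real.sin (τ ‖x‖) • F (‖x - y‖⁻¹ • (x - y)) =
        ‖x - y‖⁻¹ • (Real.cos (τ ‖x‖) • E (x - y) + Real.sin (τ ‖x‖) • F (x - y)) := by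
      rw [map_smul, map_smul]
      module
    rw [hrep, norm_smul, norm_inv, norm_norm]
    field_simp
  have hMlow : β * ‖x - y‖ ≤
      ‖Real.cos (τ ‖x‖) • E (x - y) + Real.sin (τ ‖x‖) • F (x - y)‖ := by
    rw [hMnorm, mul_comm]
    exact mul_le_mul_of_nonneg_left hlow hd.le
  have hMhigh : ‖Real.cos (τ ‖x‖) • E (x - y) + Real.sin (τ ‖x‖) • F (x - y)‖ ≤
      Real.sqrt 2 * (1 + γ) * ‖x - y‖ := by
    rw [hMnorm]
    have hEw := (hE _ hw1).2
    have hFw := (hF _ hw1).2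
    have h1 : ‖Real.cos (τ ‖x‖) • E (‖x - y‖⁻¹ • (x - y)) +
        Real.sin (τ ‖x‖) • F (‖x - y‖⁻¹ • (x - y))‖ ≤
        |Real.cos (τ ‖x‖)| * ‖E (‖x - y‖⁻¹ • (x - y))‖ +
          |Real.sin (τ ‖x‖)| * ‖F (‖x - y‖⁻¹ • (x - y))‖ := by
      refine le_trans (norm_add_le _ _) ?_
      rw [norm_smul, norm_smul, Real.norm_eq_abs, Real.norm_eq_abs]
    have h2 : |Real.cos (τ ‖x‖)| * ‖E (‖x - y‖⁻¹ • (x - y))‖ +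
          |Real.sin (τ ‖x‖)| * ‖F (‖x - y‖⁻¹ • (x - y))‖ ≤
        (|Real.cos (τ ‖x‖)| + |Real.sin (τ ‖x‖)|) * (1 + γ) := by
      nlinarith [abs_nonneg (Real.cos (τ ‖x‖)), abs_nonneg (Real.sin (τ ‖x‖)),
        norm_nonneg (E (‖x - y‖⁻¹ • (x - y))), norm_nonneg (F (‖x - y‖⁻¹ • (x - y)))]
    have h3 : |Real.cos (τ ‖x‖)| + |Real.sin (τ ‖x‖)| ≤ Real.sqrt 2 := by
      have := abs_sin_add_abs_cos_le' (τ ‖x‖)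
      linarith
    have h4 : ‖Real.cos (τ ‖x‖) • E (‖x - y‖⁻¹ • (x - y)) +
        Real.sin (τ ‖x‖) • F (‖x - y‖⁻¹ • (x - y))‖ ≤ Real.sqrt 2 * (1 + γ) :=
      le_trans (le_trans h1 h2) (mul_le_mul_of_nonneg_right h3 h1γ.le)
    calc ‖x - y‖ * ‖Real.cos (τ ‖x‖) • E (‖x - y‖⁻¹ • (x - y)) +
          Real.sin (τ ‖x‖) • F (‖x - y‖⁻¹ • (x - y))‖ ≤
          ‖x - y‖ * (Real.sqrt 2 * (1 + γ)) := mul_le_mul_of_nonneg_left h4 hd.le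
      _ = Real.sqrt 2 * (1 + γ) * ‖x - y‖ := by ring
  -- error term bound via vector MVT
  have hNbound : ‖(Real.cos (τ ‖x‖) - Real.cos (τ ‖y‖)) • E y +
      (Real.sin (τ ‖x‖) - Real.sin (τ ‖y‖)) • F y‖ ≤
      (Real.sqrt 2 * (1 + γ) * ‖y‖) * (τ ‖x‖ - τ ‖y‖) := by
    have hderiv : ∀ t ∈ Icc (τ ‖y‖) (τ ‖x‖),
        HasDerivWithinAt (fun t => Real.cos t • E y + Real.sin t • F y)
          ((-Real.sin t) • E y + Real.cos t • F y) (Icc (τ ‖y‖) (τ ‖x‖)) t := by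
      intro t _
      exact (((Real.hasDerivAt_cos t).smul_const (E y)).add
        ((Real.hasDerivAt_sin t).smul_const (F y))).hasDerivWithinAt
    have hbound : ∀ t ∈ Ico (τ ‖y‖) (τ ‖x‖),
        ‖(-Real.sin t) • E y + Real.cos t • F y‖ ≤ Real.sqrt 2 * (1 + γ) * ‖y‖ := by
      intro t _
      have h1 : ‖(-Real.sin t) • E y + Real.cos t • F y‖ ≤
          |Real.sin t| * ‖E y‖ + |Real.cos t| * ‖F y‖ := by
        refine le_trans (norm_add_le _ _) ?_
        rw [norm_smul, norm_smul, Real.norm_eq_abs, Real.norm_eq_abs, abs_neg]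
      have h2 := hEb y
      have h3 := hFb y
      have h4 := abs_sin_add_abs_cos_le' t
      have p1 : |Real.sin t| * ‖E y‖ ≤ |Real.sin t| * ((1 + γ) * ‖y‖) :=
        mul_le_mul_of_nonneg_left h2 (abs_nonneg _)
      have p2 : |Real.cos t| * ‖F y‖ ≤ |Real.cos t| * ((1 + γ) * ‖y‖) :=
        mul_le_mul_of_nonneg_left h3 (abs_nonneg _)
      have p3 : (|Real.sin t| + |Real.cos t|) * ((1 + γ) * ‖y‖) ≤
          Real.sqrt 2 * ((1 + γ) * ‖y‖) :=
        mul_le_mul_of_nonneg_right h4 (by positivity)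
      have p4 : (|Real.sin t| + |Real.cos t|) * ((1 + γ) * ‖y‖) =
          |Real.sin t| * ((1 + γ) * ‖y‖) + |Real.cos t| * ((1 + γ) * ‖y‖) := by ring
      have p5 : Real.sqrt 2 * ((1 + γ) * ‖y‖) = Real.sqrt 2 * (1 + γ) * ‖y‖ := by ring
      linarith
    have hmem : τ ‖x‖ ∈ Icc (τ ‖y‖) (τ ‖x‖) := ⟨by linarith, le_refl _⟩
    have hkey := norm_image_sub_le_of_norm_deriv_le_segment' hderiv hbound (τ ‖x‖) hmem
    have hfeq : (Real.cos (τ ‖x‖) • E y + Real.sin (τ ‖x‖) • F y) -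
        (Real.cos (τ ‖y‖) • E y + Real.sin (τ ‖y‖) • F y) =
        (Real.cos (τ ‖x‖) - Real.cos (τ ‖y‖)) • E y +
          (Real.sin (τ ‖x‖) - Real.sin (τ ‖y‖)) • F y := by
      module
    rw [← hfeq]
    exact hkey
  have hNfinal : ‖(Real.cos (τ ‖x‖) - Real.cos (τ ‖y‖)) • E y +
      (Real.sin (τ ‖x‖) - Real.sin (τ ‖y‖)) • F y‖ ≤
      ε * Real.sqrt 2 * (1 + γ) * ‖x - y‖ := by
    have h1 : (Real.sqrt 2 * (1 + γ) * ‖y‖) * (τ ‖x‖ - τ ‖y‖) ≤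
        (Real.sqrt 2 * (1 + γ) * ‖y‖) * (ε * ‖x - y‖ / ‖y‖) := by
      apply mul_le_mul_of_nonneg_left hτle
      positivity
    have h2 : (Real.sqrt 2 * (1 + γ) * ‖y‖) * (ε * ‖x - y‖ / ‖y‖) =
        ε * Real.sqrt 2 * (1 + γ) * ‖x - y‖ := by
      field_simp
    linarith [hNbound]
  -- combine
  have hup : ‖T x - T y‖ ≤ (Real.sqrt 2 * (1 + γ) + ε * Real.sqrt 2 * (1 + γ)) * ‖x - y‖ := by
    rw [hdecomp]
    refine le_trans (norm_add_le _ _) ?_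
    nlinarith [hMhigh, hNfinal]
  have hlo : (β - ε * Real.sqrt 2 * (1 + γ)) * ‖x - y‖ ≤ ‖T x - T y‖ := by
    rw [hdecomp]
    have hge : ‖Real.cos (τ ‖x‖) • E (x - y) + Real.sin (τ ‖x‖) • F (x - y)‖ ≤
        ‖(Real.cos (τ ‖x‖) • E (x - y) + Real.sin (τ ‖x‖) • F (x - y)) +
          ((Real.cos (τ ‖x‖) - Real.cos (τ ‖y‖)) • E y +
            (Real.sin (τ ‖x‖) - Real.sin (τ ‖y‖)) • F y)‖ +
        ‖(Real.cos (τ ‖x‖) - Real.cos (τ ‖y‖)) • E y +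
          (Real.sin (τ ‖x‖) - Real.sin (τ ‖y‖)) • F y‖ := by
      have h := norm_sub_le ((Real.cos (τ ‖x‖) • E (x - y) + Real.sin (τ ‖x‖) • F (x - y)) +
          ((Real.cos (τ ‖x‖) - Real.cos (τ ‖y‖)) • E y +
            (Real.sin (τ ‖x‖) - Real.sin (τ ‖y‖)) • F y))
          ((Real.cos (τ ‖x‖) - Real.cos (τ ‖y‖)) • E y +
            (Real.sin (τ ‖x‖) - Real.sin (τ ‖y‖)) • F y)
      have heq : ((Real.cos (τ ‖x‖) • E (x - y) + Real.sin (τ ‖x‖) • F (x - y)) +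
          ((Real.cos (τ ‖x‖) - Real.cos (τ ‖y‖)) • E y +
            (Real.sin (τ ‖x‖) - Real.sin (τ ‖y‖)) • F y)) -
          ((Real.cos (τ ‖x‖) - Real.cos (τ ‖y‖)) • E y +
            (Real.sin (τ ‖x‖) - Real.sin (τ ‖y‖)) • F y) =
          Real.cos (τ ‖x‖) • E (x - y) + Real.sin (τ ‖x‖) • F (x - y) := by abel
      rw [heq] at h
      exact h
    nlinarith [hMlow, hNfinal, hge]
  constructor
  · rw [le_div_iff₀ hd]; linarith
  · rw [div_le_iff₀ hd]; linarith
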